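/- For any finite sequence A = (a_1,…,a_n) of positive integers and any m ≥ 0, in the algebra 𝓕₂* the (2^m)-th power of the basis element S_A equals the single basis element S_{(2^m a_1, 2^m a_2, …, 2^m a_n)}. -/

import Mathlib

/-- The overlapping shuffle product of two finite sequences, as a multiset
(counting multiplicities). -/
def osp : List ℕ → List ℕ → Multiset (List ℕ)
  | A, [] => {A}
  | [], B => {B}
  | a :: A, b :: B =>
      ((osp A (b :: B)).map (a :: ·)) +
      ((osp (a :: A) B).map (b :: ·)) +
      ((osp A B).map ((a + b) :: ·))
termination_by A B => A.length + B.length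
decreasing_by all_goals (simp only [List.length_cons]; omega)

/-- The underlying free module over `ZMod 2` on the set of finite sequences
(this carries the mod 2 dual Leibniz--Hopf algebra `𝓕₂*`). -/
abbrev F2D : Type := (List ℕ) →₀ ZMod 2

/-- The basis element `S_I`. -/
noncomputable def sElem (I : List ℕ) : F2D := Finsupp.single I 1

/-- The element of `𝓕₂*` associated to a multiset of sequences, keeping
multiplicities mod 2. -/
noncomputable def ofMS (m : Multiset (List ℕ)) : F2D := (m.map sElem).sum

/-- The bilinear product of `𝓕₂*`: on basis elements,
`S_I · S_J = Σ_K (multiplicity of K in osp I J mod 2) • S_K`. -/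
noncomputable def fmul (x y : F2D) : F2D :=
  x.sum fun I a => y.sum fun J b => (a * b) • ofMS (osp I J)

/-- Powers in `𝓕₂*` (with `S_{()}` the unit). -/
noncomputable def fpow (x : F2D) : ℕ → F2D
  | 0 => sElem []
  | n + 1 => fmul x (fpow x n)

@[simp] lemma osp_nil_right (A : List ℕ) : osp A [] = {A} := by
  cases A <;> simp [osp]

@[simp] lemma osp_nil_left (B : List ℕ) : osp [] B = {B} := by
  cases B <;> simp [osp]

lemma osp_cons_cons (a b : ℕ) (A B : List ℕ) :
    osp (a :: A) (b :: B) =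
      ((osp A (b :: B)).map (a :: ·)) +
      ((osp (a :: A) B).map (b :: ·)) +
      ((osp A B).map ((a + b) :: ·)) := by
  rw [osp]

lemma osp_comm (A B : List ℕ) : osp A B = osp B A := by
  match A, B with
  | A, [] => simp
  | [], B => simp
  | a :: A, b :: B =>
    rw [osp_cons_cons, osp_cons_cons b a]
    rw [osp_comm A (b :: B), osp_comm (a :: A) B, osp_comm A B, Nat.add_comm a b]
    abel
termination_by A.length + B.length
decreasing_by all_goals (simp only [List.length_cons]; omega)

lemma osp_osp_left (a b c : ℕ) (I J K : List ℕ) :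
    ((osp (a::I) (b::J)).bind (fun L => osp L (c::K))) =
      (((osp I (b::J)).bind (fun L => osp L (c::K))).map (a :: ·) +
      ((osp (a::I) J).bind (fun L => osp L (c::K))).map (b :: ·) +
      ((osp (a::I) (b::J)).bind (fun L => osp L K)).map (c :: ·)) +
      (((osp I J).bind (fun L => osp L (c::K))).map ((a+b) :: ·) +
      ((osp I (b::J)).bind (fun L => osp L K)).map ((a+c) :: ·) +
      ((osp (a::I) J).bind (fun L => osp L K)).map ((b+c) :: ·)) +
      ((osp I J).bind (fun L => osp L K)).map ((a+b+c) :: ·) := by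
  simp only [osp_cons_cons, Multiset.add_bind, Multiset.bind_add, Multiset.bind_map,
    ← Multiset.map_bind, Multiset.map_add, Nat.add_assoc]
  abel

lemma osp_osp_right (a b c : ℕ) (I J K : List ℕ) :
    ((osp (b::J) (c::K)).bind (fun L => osp (a::I) L)) =
      (((osp (b::J) (c::K)).bind (fun L => osp I L)).map (a :: ·) +
      ((osp J (c::K)).bind (fun L => osp (a::I) L)).map (b :: ·) +
      ((osp (b::J) K).bind (fun L => osp (a::I) L)).map (c :: ·)) +
      (((osp J (c::K)).bind (fun L => osp I L)).map ((a+b) :: ·) +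
      ((osp (b::J) K).bind (fun L => osp I L)).map ((a+c) :: ·) +
      ((osp J K).bind (fun L => osp (a::I) L)).map ((b+c) :: ·)) +
      ((osp J K).bind (fun L => osp I L)).map ((a+b+c) :: ·) := by
  simp only [osp_cons_cons, Multiset.add_bind, Multiset.bind_add, Multiset.bind_map,
    ← Multiset.map_bind, Multiset.map_add, Nat.add_assoc]
  abel

lemma bind_id' {α : Type*} (m : Multiset α) : (m.bind fun L => {L}) = m := by
  induction m using Multiset.induction_on with
  | empty => simp
  | cons a s ih => simp [ih]

lemma osp_assoc (I J K : List ℕ) :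
    (osp I J).bind (fun L => osp L K) = (osp J K).bind (fun L => osp I L) := by
  match I, J, K with
  | I, J, [] => simp [Multiset.bind_singleton, Multiset.map_id', bind_id']
  | I, [], K => simp [Multiset.bind_singleton, Multiset.map_id', bind_id']
  | [], J, K =>
    cases J <;> cases K <;> simp [Multiset.bind_singleton, Multiset.map_id', bind_id']
  | a :: I, b :: J, c :: K =>
    rw [osp_osp_left, osp_osp_right,
      osp_assoc I (b::J) (c::K), osp_assoc (a::I) J (c::K), osp_assoc (a::I) (b::J) K,
      osp_assoc I J (c::K), osp_assoc I (b::J) K, osp_assoc (a::I) J K, osp_assoc I J K]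
termination_by I.length + J.length + K.length
decreasing_by all_goals (simp only [List.length_cons]; omega)

lemma F2D.add_self (x : F2D) : x + x = 0 := by
  ext l
  simp only [Finsupp.add_apply, Finsupp.coe_zero, Pi.zero_apply]
  exact CharTwo.add_self_eq_zero _

@[simp] lemma ofMS_zero : ofMS 0 = 0 := rfl

@[simp] lemma ofMS_add (m n : Multiset (List ℕ)) : ofMS (m + n) = ofMS m + ofMS n := by
  simp [ofMS]

@[simp] lemma ofMS_singleton (I : List ℕ) : ofMS {I} = sElem I := by simp [ofMS]

@[simp] lemma ofMS_cons (I : List ℕ) (m : Multiset (List ℕ)) :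
    ofMS (I ::ₘ m) = sElem I + ofMS m := by simp [ofMS]

lemma ofMS_map (f : List ℕ → List ℕ) (m : Multiset (List ℕ)) :
    ofMS (m.map f) = Finsupp.mapDomain f (ofMS m) := by
  induction m using Multiset.induction_on with
  | empty => simp
  | cons a s ih => simp [ih, sElem, Finsupp.mapDomain_add, Finsupp.mapDomain_single]

lemma fmul_single_single (I J : List ℕ) :
    fmul (sElem I) (sElem J) = ofMS (osp I J) := by
  unfold fmul sElem
  rw [Finsupp.sum_single_index (by simp), Finsupp.sum_single_index (by simp)]
  simp

lemma fmul_zero_right (x : F2D) : fmul x 0 = 0 := by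
  simp [fmul]

lemma fmul_add_right (x y z : F2D) : fmul x (y + z) = fmul x y + fmul x z := by
  unfold fmul
  rw [← Finsupp.sum_add]
  apply Finsupp.sum_congr
  intro I _
  rw [Finsupp.sum_add_index' (by simp) (by intro J b c; rw [mul_add, add_smul])]

lemma fmul_zero_left (y : F2D) : fmul 0 y = 0 := by
  simp [fmul]

lemma fmul_add_left (x y z : F2D) : fmul (x + y) z = fmul x z + fmul y z := by
  unfold fmul
  rw [Finsupp.sum_add_index' (by simp) ?_]
  intro I a b
  rw [← Finsupp.sum_add]
  apply Finsupp.sum_congr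
  intro J _
  rw [add_mul, add_smul]

lemma fmul_ofMS_right (I : List ℕ) (m : Multiset (List ℕ)) :
    fmul (sElem I) (ofMS m) = ofMS (m.bind (fun J => osp I J)) := by
  induction m using Multiset.induction_on with
  | empty => simp [fmul_zero_right]
  | cons a s ih =>
    rw [ofMS_cons, fmul_add_right, fmul_single_single, ih, Multiset.cons_bind, ofMS_add]

lemma fmul_ofMS_left (m : Multiset (List ℕ)) (K : List ℕ) :
    fmul (ofMS m) (sElem K) = ofMS (m.bind (fun L => osp L K)) := by
  induction m using Multiset.induction_on with
  | empty => simp [fmul_zero_left]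
  | cons a s ih =>
    rw [ofMS_cons, fmul_add_left, fmul_single_single, ih, Multiset.cons_bind, ofMS_add]

lemma fmul_assoc_single (I J K : List ℕ) :
    fmul (sElem I) (fmul (sElem J) (sElem K)) = fmul (fmul (sElem I) (sElem J)) (sElem K) := by
  rw [fmul_single_single, fmul_single_single, fmul_ofMS_right, fmul_ofMS_left, osp_assoc]

lemma fmul_assoc_gen (I J : List ℕ) (y : F2D) :
    fmul (sElem I) (fmul (sElem J) y) = fmul (fmul (sElem I) (sElem J)) y := by
  induction y using Finsupp.induction with
  | zero => simp [fmul_zero_right]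
  | single_add K b f _ hb ih =>
    rw [fmul_add_right, fmul_add_right, fmul_add_right, ih]
    congr 1
    have hb1 : b = 1 := by
      fin_cases b
      · exact absurd rfl hb
      · rfl
    subst hb1
    exact fmul_assoc_single I J K

lemma fmul_self (A : List ℕ) :
    fmul (sElem A) (sElem A) = sElem (A.map (fun a => 2 * a)) := by
  induction A with
  | nil => rw [fmul_single_single]; simp
  | cons a A ih =>
    rw [fmul_single_single, osp_cons_cons, ofMS_add, ofMS_add,
      osp_comm A (a :: A)]
    rw [F2D.add_self, zero_add, ofMS_map, ← fmul_single_single, ih]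
    simp [sElem, Finsupp.mapDomain_single, two_mul]

lemma fmul_sq_left (I : List ℕ) (y : F2D) :
    fmul (sElem I) (fmul (sElem I) y) = fmul (sElem (I.map (fun a => 2 * a))) y := by
  rw [fmul_assoc_gen, fmul_self]

lemma fpow_two_mul (I : List ℕ) (k : ℕ) :
    fpow (sElem I) (2 * k) = fpow (sElem (I.map (fun a => 2 * a))) k := by
  induction k with
  | zero => rfl
  | succ k ih =>
    have h : 2 * (k + 1) = (2 * k) + 1 + 1 := by ring
    rw [h]
    simp only [fpow]
    rw [ih, fmul_sq_left]

lemma sElem_pow_aux (A : List ℕ) (m : ℕ) :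
    fpow (sElem A) (2 ^ m) = sElem (A.map (fun a => 2 ^ m * a)) := by
  induction m generalizing A with
  | zero =>
    simp only [pow_zero, fpow, one_mul]
    rw [fmul_single_single, osp_nil_right, ofMS_singleton]
    simp [List.map_id']
  | succ m ih =>
    have h : 2 ^ (m + 1) = 2 * 2 ^ m := by ring
    rw [h, fpow_two_mul, ih, List.map_map]
    congr 1
    apply List.map_congr_left
    intro a _
    simp [Function.comp, pow_succ]
    ring

/-- For a sequence `A = (a_1,…,a_n)` of positive integers and `m ≥ 0`, in
`𝓕₂*` one has `S_A ^ (2^m) = S_{(2^m a_1,…,2^m a_n)}`. -/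
theorem sElem_pow_two_pow (A : List ℕ) (hA : ∀ a ∈ A, 0 < a) (m : ℕ) :
    fpow (sElem A) (2 ^ m) = sElem (A.map (fun a => 2 ^ m * a)) :=
  sElem_pow_aux A m
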